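/- With F defined as the sum over categories c of the sum of the h_c largest weights W(v,c) over v ∈ S, F is submodular: for all A ⊆ B ⊆ I and e ∈ I \ B, F(A ∪ {e}) − F(A) ≥ F(B ∪ {e}) − F(B). -/

import Mathlib

open Finset

/-- Sum of the `k` largest elements of a finite multiset of reals
(all elements if fewer than `k`). -/
noncomputable def topSum (k : ℕ) (M : Multiset ℝ) : ℝ :=
  ((M.sort (· ≥ ·)).take k).sum

/-- Single-category top-`h` sum of weights `w` over a finite set `S`. -/
noncomputable def topSet {I : Type*} (w : I → ℝ) (h : ℕ) (S : Finset I) : ℝ :=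
  topSum h (S.val.map w)

/-- The `h`-th largest value of `w` on `S` (meaningful when `h ≤ S.card`). -/
noncomputable def kthLargest {I : Type*} (w : I → ℝ) (h : ℕ) (S : Finset I) : ℝ :=
  ((S.val.map w).sort (· ≥ ·)).getD (h - 1) 0

/- ---------- auxiliary lemmas ---------- -/

lemma sort_cons_eq_orderedInsert (x : ℝ) (M : Multiset ℝ) :
    (x ::ₘ M).sort (· ≥ ·) = (M.sort (· ≥ ·)).orderedInsert (· ≥ ·) x := by
  refine (fun hp h1 h2 => List.Perm.eq_of_pairwise' (r := (· ≥ ·)) h1 h2 hp) ?_ ?_ ?_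
  · have h1 : ((x ::ₘ M).sort (· ≥ ·) : Multiset ℝ) = x ::ₘ M := Multiset.sort_eq _ _
    have h2 : ((M.sort (· ≥ ·)).orderedInsert (· ≥ ·) x : Multiset ℝ) = x ::ₘ M := by
      have := (List.perm_orderedInsert (· ≥ ·) x (M.sort (· ≥ ·)))
      rw [Multiset.coe_eq_coe.2 this, ← Multiset.cons_coe, Multiset.sort_eq]
    rw [← Multiset.coe_eq_coe, h1, h2]
  · exact Multiset.pairwise_sort _ _
  · exact (Multiset.pairwise_sort M _).orderedInsert x _

lemma sum_take_succ (L : List ℝ) (i : ℕ) :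
    (L.take (i + 1)).sum = (L.take i).sum + L.getD i 0 := by
  induction L generalizing i with
  | nil => simp
  | cons a L ih =>
    cases i with
    | zero => simp
    | succ j => simp [List.take_succ_cons, ih j, add_assoc]

lemma getD_mem_or_zero (L : List ℝ) (i : ℕ) : L.getD i 0 ∈ L ∨ L.getD i 0 = 0 := by
  by_cases h : i < L.length
  · left
    rw [List.getD_eq_getElem _ _ h]
    exact List.getElem_mem h
  · right
    exact List.getD_eq_default _ _ (not_lt.1 h)

lemma getD_succ_le (L : List ℝ) (hL : L.Pairwise (· ≥ ·)) (h0 : ∀ y ∈ L, 0 ≤ y) (i : ℕ) :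
    L.getD (i + 1) 0 ≤ L.getD i 0 := by
  induction L generalizing i with
  | nil => simp
  | cons a L ih =>
    cases i with
    | zero =>
      show L.getD 0 0 ≤ a
      cases L with
      | nil => exact h0 a (by simp)
      | cons b L' => exact (List.pairwise_cons.1 hL).1 b (by simp)
    | succ j =>
      show L.getD (j + 1) 0 ≤ L.getD j 0
      exact ih (List.pairwise_cons.1 hL).2 (fun y hy => h0 y (by simp [hy])) j

lemma getD_le_orderedInsert (L : List ℝ) (hL : L.Pairwise (· ≥ ·)) (h0 : ∀ y ∈ L, 0 ≤ y)
    (x : ℝ) (hx : 0 ≤ x) (i : ℕ) :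
    L.getD i 0 ≤ (L.orderedInsert (· ≥ ·) x).getD i 0 := by
  induction L generalizing i with
  | nil =>
    simp only [List.orderedInsert_nil, List.getD_nil]
    cases i with
    | zero => simpa using hx
    | succ j => simp
  | cons a L ih =>
    by_cases hxa : x ≥ a
    · rw [List.orderedInsert_cons_of_le _ _ hxa]
      cases i with
      | zero => exact hxa
      | succ j =>
        show (a :: L).getD (j + 1) 0 ≤ (a :: L).getD j 0
        exact getD_succ_le (a :: L) hL h0 j
    · rw [show (a :: L).orderedInsert (· ≥ ·) x = a :: L.orderedInsert (· ≥ ·) x by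
        simp [List.orderedInsert, hxa]]
      cases i with
      | zero => simp
      | succ j =>
        exact ih (List.pairwise_cons.1 hL).2 (fun y hy => h0 y (by simp [hy])) j

lemma take_sum_orderedInsert (L : List ℝ) (hL : L.Pairwise (· ≥ ·)) (h0 : ∀ y ∈ L, 0 ≤ y)
    (x : ℝ) (hx : 0 ≤ x) (k : ℕ) (hk : 1 ≤ k) :
    ((L.orderedInsert (· ≥ ·) x).take k).sum
      = (L.take k).sum + max 0 (x - L.getD (k - 1) 0) := by
  induction L generalizing k with
  | nil =>
    rw [List.orderedInsert_nil, List.take_of_length_le (by simpa using hk)]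
    simp [max_eq_right hx]
  | cons a L ih =>
    by_cases hxa : x ≥ a
    · rw [List.orderedInsert_cons_of_le _ _ hxa]
      match k, hk with
      | 1, _ =>
        have : max 0 (x - a) = x - a := max_eq_right (by linarith)
        simp [this]
      | (k'' + 2), _ =>
        have hge : L.getD k'' 0 ≤ x := by
          rcases getD_mem_or_zero L k'' with hm | hz
          · exact le_trans ((List.pairwise_cons.1 hL).1 _ hm) hxa
          · rw [hz]; exact hx
        have hmax : max 0 (x - L.getD k'' 0) = x - L.getD k'' 0 :=
          max_eq_right (by linarith)
        simp only [List.take_succ_cons, List.sum_cons, Nat.add_sub_cancel,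
          sum_take_succ L k'']
        rw [show (k'' + 2 - 1 : ℕ) = k'' + 1 from by omega, List.getD_cons_succ, hmax]
        ring
    · rw [show (a :: L).orderedInsert (· ≥ ·) x = a :: L.orderedInsert (· ≥ ·) x by
        simp [List.orderedInsert, hxa]]
      match k, hk with
      | 1, _ =>
        have : max 0 (x - a) = 0 := max_eq_left (by push_neg at hxa; linarith)
        simp [this]
      | (k'' + 2), _ =>
        simp only [List.take_succ_cons, List.sum_cons, Nat.add_sub_cancel,
          ih (List.pairwise_cons.1 hL).2 (fun y hy => h0 y (by simp [hy])) (k'' + 1)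
            (by omega)]
        rw [show (k'' + 2 - 1 : ℕ) = k'' + 1 from by omega, List.getD_cons_succ]
        ring_nf

/-- Marginal gain for one category. -/
lemma topSet_insert {I : Type*} [DecidableEq I] (w : I → ℝ) (hw : ∀ v, 0 ≤ w v)
    (k : ℕ) (hk : 1 ≤ k) (S : Finset I) (e : I) (he : e ∉ S) :
    topSet w k (insert e S) = topSet w k S + max 0 (w e - kthLargest w k S) := by
  have hval : (insert e S).val = e ::ₘ S.val := Finset.insert_val_of_notMem he
  have hmap : ((insert e S).val.map w) = w e ::ₘ S.val.map w := by rw [hval]; simp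
  unfold topSet topSum kthLargest
  rw [hmap, sort_cons_eq_orderedInsert]
  exact take_sum_orderedInsert _ (Multiset.pairwise_sort _ _)
    (by intro y hy
        have : y ∈ (S.val.map w) := by
          have := Multiset.mem_sort (α := ℝ) (· ≥ ·) (s := S.val.map w) (a := y)
          rw [← this]; exact hy
        obtain ⟨v, _, rfl⟩ := Multiset.mem_map.1 this
        exact hw v)
    (w e) (hw e) k hk

/-- Monotonicity of the `k`-th largest under multiset extension. -/
lemma getD_sort_mono (M N : Multiset ℝ) (hMN : M ≤ N) (h0 : ∀ y ∈ N, 0 ≤ y) (i : ℕ) :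
    (M.sort (· ≥ ·)).getD i 0 ≤ (N.sort (· ≥ ·)).getD i 0 := by
  obtain ⟨K, rfl⟩ := Multiset.le_iff_exists_add.1 hMN
  clear hMN
  induction K using Multiset.induction with
  | empty => simp
  | cons x K ih =>
    have hx : 0 ≤ x := h0 x (by simp)
    have hsub : M + K ≤ M + x ::ₘ K :=
      add_le_add_right (Multiset.le_cons_self _ _) M
    have h0' : ∀ y ∈ M + K, 0 ≤ y := fun y hy => h0 y (Multiset.mem_of_le hsub hy)
    have step : ((M + K).sort (· ≥ ·)).getD i 0 ≤ ((x ::ₘ (M + K)).sort (· ≥ ·)).getD i 0 := by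
      rw [sort_cons_eq_orderedInsert]
      refine getD_le_orderedInsert _ (Multiset.pairwise_sort _ _) ?_ x hx i
      intro y hy
      have : y ∈ M + K := by
        have := Multiset.mem_sort (α := ℝ) (· ≥ ·) (s := M + K) (a := y)
        rw [← this]; exact hy
      exact h0' y this
    have : M + x ::ₘ K = x ::ₘ (M + K) := by
      simp [Multiset.add_cons]
    calc (M.sort (· ≥ ·)).getD i 0 ≤ ((M + K).sort (· ≥ ·)).getD i 0 := ih h0'
      _ ≤ ((x ::ₘ (M + K)).sort (· ≥ ·)).getD i 0 := step
      _ = ((M + x ::ₘ K).sort (· ≥ ·)).getD i 0 := by rw [this]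

theorem top_h_objective_submodular {I C : Type*} [Fintype I] [Fintype C] [DecidableEq I]
    (W : I → C → ℝ) (hW : ∀ v c, 0 ≤ W v c)
    (h : C → ℕ) (hh : ∀ c, 1 ≤ h c)
    (A B : Finset I) (hAB : A ⊆ B) (e : I) (he : e ∉ B) :
    (∑ c : C, topSet (fun v => W v c) (h c) (insert e A)) -
        (∑ c : C, topSet (fun v => W v c) (h c) A) ≥
      (∑ c : C, topSet (fun v => W v c) (h c) (insert e B)) -
        (∑ c : C, topSet (fun v => W v c) (h c) B) := by
  have heA : e ∉ A := fun hmem => he (hAB hmem)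
  have key : ∀ c : C,
      topSet (fun v => W v c) (h c) (insert e B) - topSet (fun v => W v c) (h c) B ≤
      topSet (fun v => W v c) (h c) (insert e A) - topSet (fun v => W v c) (h c) A := by
    intro c
    rw [topSet_insert (fun v => W v c) (fun v => hW v c) (h c) (hh c) A e heA,
        topSet_insert (fun v => W v c) (fun v => hW v c) (h c) (hh c) B e he]
    simp only [add_sub_cancel_left]
    apply max_le_max le_rfl
    apply sub_le_sub_left
    unfold kthLargest
    apply getD_sort_mono
    · exact Multiset.map_le_map (Finset.val_le_iff.2 hAB)
    · intro y hy
      obtain ⟨v, _, rfl⟩ := Multiset.mem_map.1 hy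
      exact hW v c
  rw [ge_iff_le, ← Finset.sum_sub_distrib, ← Finset.sum_sub_distrib]
  exact Finset.sum_le_sum fun c _ => key c
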